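/- Let z = r·e^{iπ} with r > 0 and let 0 < b ≤ 1 < a < 2, with powers defined via the principal branch (z^c = r^c·e^{icπ}). Then 0 ≤ Arg(z^a − 1) − Arg(z^b − 1) ≤ (a − b)·π, where Arg takes values in [0, 2π). -/

import Mathlib

open Complex Real

/-- The argument function with values in `[0, 2π)`. -/
noncomputable def Arg2 (z : ℂ) : ℝ :=
  if Complex.arg z < 0 then Complex.arg z + 2 * Real.pi else Complex.arg z

lemma arg_le_arg_aux (z w : ℂ) (hz : z ≠ 0) (hw : w ≠ 0)
    (h1 : Complex.arg w - Complex.arg z < Real.pi)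
    (h2 : -Real.pi < Complex.arg w - Complex.arg z)
    (h : 0 ≤ (w / z).im) : Complex.arg z ≤ Complex.arg w := by
  have hdiv : ((Complex.arg (w / z) : ℝ) : Real.Angle)
      = ((Complex.arg w - Complex.arg z : ℝ) : Real.Angle) := by
    rw [Complex.arg_div_coe_angle hw hz, ← Real.Angle.coe_sub]
  obtain ⟨k, hk⟩ := Real.Angle.angle_eq_iff_two_pi_dvd_sub.mp hdiv
  have h0 : 0 ≤ Complex.arg (w / z) := Complex.arg_nonneg_iff.mpr h
  have hπ : Complex.arg (w / z) ≤ Real.pi := Complex.arg_le_pi _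
  have hπ0 := Real.pi_pos
  have hk0 : k = 0 := by
    have h1' : (k : ℝ) < 1 := by nlinarith
    have h2' : (-1 : ℝ) < (k : ℝ) := by nlinarith
    have h1'' : k < 1 := by exact_mod_cast h1'
    have h2'' : -1 < k := by exact_mod_cast h2'
    omega
  rw [hk0] at hk
  simp at hk
  linarith

lemma cpow_neg_real (r c : ℝ) (hr : 0 < r) :
    (-(r:ℂ)) ^ (c:ℂ) =
      ((r ^ c * Real.cos (c * Real.pi) : ℝ) : ℂ)
        + ((r ^ c * Real.sin (c * Real.pi) : ℝ) : ℂ) * Complex.I := by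
  have hne : (-(r:ℂ)) ≠ 0 := by
    simp [Complex.ext_iff, hr.ne']
  rw [Complex.cpow_def_of_ne_zero hne]
  have hlog : Complex.log (-(r:ℂ)) = (Real.log r : ℂ) + Real.pi * Complex.I := by
    rw [show (-(r:ℂ)) = (((-r : ℝ)) : ℂ) by push_cast; ring]
    rw [Complex.log, Complex.norm_real, Real.norm_eq_abs, abs_of_neg (neg_neg_iff_pos.mpr hr) ]
    rw [Complex.arg_ofReal_of_neg (by linarith), neg_neg]
  rw [hlog]
  have : ((Real.log r : ℂ) + Real.pi * Complex.I) * (c : ℂ)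
      = ((c * Real.log r : ℝ) : ℂ) + ((c * Real.pi : ℝ) : ℂ) * Complex.I := by
    push_cast; ring
  rw [this, Complex.exp_add, Complex.exp_mul_I]
  have hre : Real.exp (c * Real.log r) = r ^ c := by
    rw [Real.rpow_def_of_pos hr, mul_comm]
  rw [← Complex.ofReal_exp, hre, ← Complex.ofReal_cos, ← Complex.ofReal_sin]
  push_cast
  ring

set_option maxHeartbeats 1000000 in
theorem stmt4 (a b r : ℝ) (hr : 0 < r) (hb : 0 < b) (hb1 : b ≤ 1) (ha1 : 1 < a)
    (ha : a < 2) :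
    0 ≤ Arg2 ((-(r:ℂ)) ^ (a:ℂ) - 1) - Arg2 ((-(r:ℂ)) ^ (b:ℂ) - 1) ∧
    Arg2 ((-(r:ℂ)) ^ (a:ℂ) - 1) - Arg2 ((-(r:ℂ)) ^ (b:ℂ) - 1) ≤ (a - b) * Real.pi := by
  have hπ := Real.pi_pos
  set wa := (-(r:ℂ)) ^ (a:ℂ) with hwa
  set wb := (-(r:ℂ)) ^ (b:ℂ) with hwb
  have hcpa := cpow_neg_real r a hr
  have hcpb := cpow_neg_real r b hr
  have hra : (0:ℝ) < r ^ a := Real.rpow_pos_of_pos hr a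
  have hrb : (0:ℝ) < r ^ b := Real.rpow_pos_of_pos hr b
  have hwaim : wa.im = r ^ a * Real.sin (a * Real.pi) := by rw [hwa, hcpa]; simp only [Complex.add_im, Complex.add_re, Complex.mul_im, Complex.mul_re, Complex.ofReal_im, Complex.ofReal_re, Complex.I_im, Complex.I_re]; ring
  have hware : wa.re = r ^ a * Real.cos (a * Real.pi) := by rw [hwa, hcpa]; simp only [Complex.add_im, Complex.add_re, Complex.mul_im, Complex.mul_re, Complex.ofReal_im, Complex.ofReal_re, Complex.I_im, Complex.I_re]; ring
  have hwbim : wb.im = r ^ b * Real.sin (b * Real.pi) := by rw [hwb, hcpb]; simp only [Complex.add_im, Complex.add_re, Complex.mul_im, Complex.mul_re, Complex.ofReal_im, Complex.ofReal_re, Complex.I_im, Complex.I_re]; ring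
  have hwbre : wb.re = r ^ b * Real.cos (b * Real.pi) := by rw [hwb, hcpb]; simp only [Complex.add_im, Complex.add_re, Complex.mul_im, Complex.mul_re, Complex.ofReal_im, Complex.ofReal_re, Complex.I_im, Complex.I_re]; ring
  -- sin signs
  have hsina : Real.sin (a * Real.pi) < 0 := by
    have h1 : Real.sin (a * Real.pi - Real.pi) = -Real.sin (a * Real.pi) := Real.sin_sub_pi _
    have h2 : 0 < Real.sin (a * Real.pi - Real.pi) :=
      Real.sin_pos_of_pos_of_lt_pi (by nlinarith) (by nlinarith)
    linarith
  have hsinb : 0 ≤ Real.sin (b * Real.pi) := by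
    apply Real.sin_nonneg_of_nonneg_of_le_pi (by positivity) (by nlinarith)
  -- args of wa, wb
  have hargwa : wa.arg = (a - 2) * Real.pi := by
    rw [hwa, hcpa]
    have e1 : a * Real.pi = (a - 2) * Real.pi + 2 * Real.pi := by ring
    have e2 : ((↑(r ^ a * Real.cos (a * Real.pi)) : ℂ)
        + ↑(r ^ a * Real.sin (a * Real.pi)) * Complex.I)
        = ↑(r ^ a) * (Complex.cos ↑((a - 2) * Real.pi)
          + Complex.sin ↑((a - 2) * Real.pi) * Complex.I) := by
      rw [e1, Real.cos_add_two_pi, Real.sin_add_two_pi,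
        ← Complex.ofReal_cos, ← Complex.ofReal_sin]
      push_cast; ring
    rw [e2, Complex.arg_real_mul _ hra,
      Complex.arg_cos_add_sin_mul_I ⟨by nlinarith, by nlinarith⟩]
  have hargwb : wb.arg = b * Real.pi := by
    rw [hwb, hcpb]
    have e2 : ((↑(r ^ b * Real.cos (b * Real.pi)) : ℂ)
        + ↑(r ^ b * Real.sin (b * Real.pi)) * Complex.I)
        = ↑(r ^ b) * (Complex.cos ↑(b * Real.pi)
          + Complex.sin ↑(b * Real.pi) * Complex.I) := by
      rw [← Complex.ofReal_cos, ← Complex.ofReal_sin]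
      push_cast; ring
    rw [e2, Complex.arg_real_mul _ hrb,
      Complex.arg_cos_add_sin_mul_I ⟨by nlinarith, by nlinarith⟩]
  -- the point wa - 1
  have hzaim : (wa - 1).im = r ^ a * Real.sin (a * Real.pi) := by
    simp [Complex.sub_im, hwaim]
  have hzare : (wa - 1).re = r ^ a * Real.cos (a * Real.pi) - 1 := by
    simp [Complex.sub_re, hware]
  have hzaneg : (wa - 1).im < 0 := by rw [hzaim]; nlinarith
  have hzane : wa - 1 ≠ 0 := by
    intro h0; rw [h0] at hzaneg; simp at hzaneg
  have hwane : wa ≠ 0 := by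
    intro h0
    have : wa.im < 0 := by rw [hwaim]; nlinarith
    rw [h0] at this; simp at this
  have hargza_neg : (wa - 1).arg < 0 := Complex.arg_neg_iff.mpr hzaneg
  have hargza_le : (wa - 1).arg ≤ (a - 2) * Real.pi := by
    have := arg_le_arg_aux (wa - 1) wa hzane hwane
      (by rw [hargwa]; nlinarith [Complex.neg_pi_lt_arg (wa - 1)])
      (by rw [hargwa]; nlinarith [hargza_neg])
      (by
        rw [Complex.div_im, div_sub_div_same]
        apply div_nonneg _ (Complex.normSq_nonneg _)
        rw [hzaim, hzare, hwaim, hware]; nlinarith)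
    rwa [hargwa] at this
  have hA : Arg2 (wa - 1) = (wa - 1).arg + 2 * Real.pi := if_pos hargza_neg
  -- bounds for A
  have hAub : Arg2 (wa - 1) ≤ a * Real.pi := by
    rw [hA]; nlinarith [hargza_le]
  have hAlb : Real.pi ≤ Arg2 (wa - 1) := by
    rw [hA]; nlinarith [Complex.neg_pi_lt_arg (wa - 1)]
  -- bounds for B
  have hBub : Arg2 (wb - 1) ≤ Real.pi ∧ b * Real.pi ≤ Arg2 (wb - 1) := by
    have hzbim : (wb - 1).im = r ^ b * Real.sin (b * Real.pi) := by
      simp [Complex.sub_im, hwbim]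
    have hzbre : (wb - 1).re = r ^ b * Real.cos (b * Real.pi) - 1 := by
      simp [Complex.sub_re, hwbre]
    rcases eq_or_lt_of_le hb1 with hbe | hblt
    · -- b = 1
      subst hbe
      have hval : wb - 1 = ((-r - 1 : ℝ) : ℂ) := by
        rw [hwb, hcpb, one_mul, Real.cos_pi, Real.sin_pi, Real.rpow_one]
        push_cast; ring
      have harg : (wb - 1).arg = Real.pi := by
        rw [hval]
        exact Complex.arg_ofReal_of_neg (by linarith)
      have hB : Arg2 (wb - 1) = Real.pi := by
        simp [Arg2, harg, hπ.not_gt]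
      exact ⟨le_of_eq hB, by rw [hB, one_mul]⟩
    · -- b < 1
      have hsinb' : 0 < Real.sin (b * Real.pi) :=
        Real.sin_pos_of_pos_of_lt_pi (by positivity) (by nlinarith)
      have hzbpos : 0 < (wb - 1).im := by rw [hzbim]; positivity
      have hzbne : wb - 1 ≠ 0 := by
        intro h0; rw [h0] at hzbpos; simp at hzbpos
      have hwbne : wb ≠ 0 := by
        intro h0
        have : 0 < wb.im := by rw [hwbim]; positivity
        rw [h0] at this; simp at this
      have hargzb_nonneg : 0 ≤ (wb - 1).arg := Complex.arg_nonneg_iff.mpr hzbpos.le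
      have hargzb_ge : b * Real.pi ≤ (wb - 1).arg := by
        have := arg_le_arg_aux wb (wb - 1) hwbne hzbne
          (by rw [hargwb]; nlinarith [Complex.arg_le_pi (wb - 1)])
          (by rw [hargwb]; nlinarith [hargzb_nonneg])
          (by
            rw [Complex.div_im, div_sub_div_same]
            apply div_nonneg _ (Complex.normSq_nonneg _)
            rw [hzbim, hzbre, hwbim, hwbre]; nlinarith)
        rwa [hargwb] at this
      have hB : Arg2 (wb - 1) = (wb - 1).arg := if_neg (not_lt.mpr hargzb_nonneg)
      exact ⟨by rw [hB]; exact Complex.arg_le_pi _, by rw [hB]; exact hargzb_ge⟩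
  constructor
  · linarith [hBub.1, hAlb]
  · nlinarith [hBub.2, hAub]
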